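/- Suppose that for a finite set E of n points in ℝ², hinges of any nonzero type number at most H·n² and pairs with any fixed nonzero dot product number at most S·n^{4/3}. Then for every k ≥ 3 with k ≡ 0 (mod 3) and every k-tuple of nonzero reals (α₁,…,α_k), the number of k-chains of that type in E is at most H^{(k-3)/3}·S²·n^{2(k+1)/3}. -/

import Mathlib

/-- The standard dot product on ℝ². -/
def dot (A B : ℝ × ℝ) : ℝ := A.1 * B.1 + A.2 * B.2

/-- The set of k-chains of type τ in E: tuples of k+1 points of E whose consecutive
dot products are prescribed by τ. -/
def chains (E : Finset (ℝ × ℝ)) {k : ℕ} (τ : Fin k → ℝ) : Set (Fin (k + 1) → ℝ × ℝ) :=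
  {R | (∀ i, R i ∈ E) ∧ ∀ j : Fin k, dot (R j.castSucc) (R j.succ) = τ j}

private lemma ncard_prod' {α β : Type*} (s : Set α) (t : Set β) :
    (s ×ˢ t).ncard = s.ncard * t.ncard := by
  rw [← Nat.card_coe_set_eq, ← Nat.card_coe_set_eq, ← Nat.card_coe_set_eq,
    Nat.card_congr (Equiv.Set.prod s t), Nat.card_prod]

private lemma chains_finite (E : Finset (ℝ × ℝ)) {k : ℕ} (τ : Fin k → ℝ) :
    (chains E τ).Finite := by
  have hsub : chains E τ ⊆ Set.pi Set.univ (fun _ : Fin (k + 1) => (E : Set (ℝ × ℝ))) := by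
    intro R hR i _
    exact hR.1 i
  exact (Set.Finite.pi (fun _ => E.finite_toSet)).subset hsub

private lemma pairs_finite (E : Finset (ℝ × ℝ)) (a : ℝ) :
    ({p : (ℝ × ℝ) × (ℝ × ℝ) | p.1 ∈ E ∧ p.2 ∈ E ∧ dot p.1 p.2 = a}).Finite := by
  apply (E.finite_toSet.prod E.finite_toSet).subset
  intro p hp
  exact ⟨hp.1, hp.2.1⟩

private lemma hinges_finite (E : Finset (ℝ × ℝ)) (a b : ℝ) :
    ({t : (ℝ × ℝ) × (ℝ × ℝ) × (ℝ × ℝ) | t.1 ∈ E ∧ t.2.1 ∈ E ∧ t.2.2 ∈ E ∧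
      dot t.1 t.2.1 = a ∧ dot t.2.1 t.2.2 = b}).Finite := by
  apply (E.finite_toSet.prod (E.finite_toSet.prod E.finite_toSet)).subset
  intro t ht
  exact ⟨ht.1, ht.2.1, ht.2.2.1⟩

private lemma chains_base (E : Finset (ℝ × ℝ)) (α : Fin 3 → ℝ) :
    (chains E α).ncard ≤
      ({p : (ℝ × ℝ) × (ℝ × ℝ) | p.1 ∈ E ∧ p.2 ∈ E ∧ dot p.1 p.2 = α ⟨0, by omega⟩}).ncard *
      ({p : (ℝ × ℝ) × (ℝ × ℝ) | p.1 ∈ E ∧ p.2 ∈ E ∧ dot p.1 p.2 = α ⟨2, by omega⟩}).ncard := by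
  rw [← ncard_prod']
  refine Set.ncard_le_ncard_of_injOn
    (fun R => ((R ⟨0, by omega⟩, R ⟨1, by omega⟩), (R ⟨2, by omega⟩, R ⟨3, by omega⟩)))
    ?_ ?_ ((pairs_finite E _).prod (pairs_finite E _))
  · intro R hR
    refine ⟨⟨hR.1 _, hR.1 _, ?_⟩, ⟨hR.1 _, hR.1 _, ?_⟩⟩
    · exact hR.2 ⟨0, by omega⟩
    · exact hR.2 ⟨2, by omega⟩
  · intro R hR R' hR' h
    simp only [Prod.mk.injEq] at h
    funext i
    rcases i with ⟨v, hv⟩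
    interval_cases v
    · exact h.1.1
    · exact h.1.2
    · exact h.2.1
    · exact h.2.2

private lemma chains_step (E : Finset (ℝ × ℝ)) (k : ℕ) (α : Fin (k + 3) → ℝ) :
    (chains E α).ncard ≤
      ({t : (ℝ × ℝ) × (ℝ × ℝ) × (ℝ × ℝ) | t.1 ∈ E ∧ t.2.1 ∈ E ∧ t.2.2 ∈ E ∧
        dot t.1 t.2.1 = α ⟨0, by omega⟩ ∧ dot t.2.1 t.2.2 = α ⟨1, by omega⟩}).ncard *
      (chains E (fun j : Fin k => α ⟨j.val + 3, by omega⟩)).ncard := by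
  rw [← ncard_prod']
  refine Set.ncard_le_ncard_of_injOn
    (fun R => ((R ⟨0, by omega⟩, R ⟨1, by omega⟩, R ⟨2, by omega⟩),
      fun i : Fin (k + 1) => R ⟨i.val + 3, by omega⟩))
    ?_ ?_ ((hinges_finite E _ _).prod (chains_finite E _))
  · intro R hR
    refine ⟨⟨hR.1 _, hR.1 _, hR.1 _, hR.2 ⟨0, by omega⟩, hR.2 ⟨1, by omega⟩⟩,
      fun i => hR.1 _, fun j => ?_⟩
    have := hR.2 ⟨j.val + 3, by omega⟩
    convert this using 3
    all_goals (apply Fin.ext; simp <;> omega)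
  · intro R hR R' hR' h
    simp only [Prod.mk.injEq] at h
    obtain ⟨⟨h0, h1, h2⟩, htail⟩ := h
    funext i
    rcases i with ⟨v, hv⟩
    by_cases hv3 : v < 3
    · interval_cases v
      · exact h0
      · exact h1
      · exact h2
    · have e : (⟨v, hv⟩ : Fin (k + 3 + 1)) = ⟨(v - 3) + 3, by omega⟩ := by
        apply Fin.ext
        show v = (v - 3) + 3
        omega
      rw [e]
      exact congrFun htail ⟨v - 3, by omega⟩

theorem chains_bound_zero_mod_three (E : Finset (ℝ × ℝ)) (H S : ℝ)
    (hH : ∀ α₁ α₂ : ℝ, α₁ ≠ 0 → α₂ ≠ 0 →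
      ({t : (ℝ × ℝ) × (ℝ × ℝ) × (ℝ × ℝ) | t.1 ∈ E ∧ t.2.1 ∈ E ∧ t.2.2 ∈ E ∧
        dot t.1 t.2.1 = α₁ ∧ dot t.2.1 t.2.2 = α₂}.ncard : ℝ) ≤ H * (E.card : ℝ) ^ 2)
    (hS : ∀ α : ℝ, α ≠ 0 →
      ({p : (ℝ × ℝ) × (ℝ × ℝ) | p.1 ∈ E ∧ p.2 ∈ E ∧ dot p.1 p.2 = α}.ncard : ℝ) ≤
        S * (E.card : ℝ) ^ ((4:ℝ)/3))
    (k : ℕ) (hk : 3 ≤ k) (hk3 : k % 3 = 0) (α : Fin k → ℝ) (hα : ∀ j, α j ≠ 0) :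
    ((chains E α).ncard : ℝ) ≤ H ^ ((k - 3) / 3) * S ^ 2 * (E.card : ℝ) ^ ((2 * (k + 1) : ℝ) / 3) := by
  obtain ⟨m, rfl⟩ : ∃ m, k = 3 * m + 3 := ⟨k / 3 - 1, by omega⟩
  rcases Nat.eq_zero_or_pos E.card with hE | hE
  · -- E is empty
    have hEempty : E = ∅ := Finset.card_eq_zero.mp hE
    have : chains E α = ∅ := by
      ext R
      simp only [chains, Set.mem_setOf_eq, Set.mem_empty_iff_false, iff_false, not_and]
      intro hin
      exact absurd (hin 0) (by simp [hEempty])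
    rw [this, hE]
    simp only [Set.ncard_empty, Nat.cast_zero, CharP.cast_eq_zero]
    rw [Real.zero_rpow (by positivity), mul_zero]
  · have hn : (0 : ℝ) < (E.card : ℝ) := by exact_mod_cast hE
    have key : ∀ m (α : Fin (3 * m + 3) → ℝ), (∀ j, α j ≠ 0) →
        ((chains E α).ncard : ℝ) ≤
          H ^ m * S ^ 2 * (E.card : ℝ) ^ ((6 * (m : ℝ) + 8) / 3) := by
      intro m
      induction m with
      | zero =>
        intro α hα
        have hb := chains_base E α
        have hb' : ((chains E α).ncard : ℝ) ≤
            ({p : (ℝ × ℝ) × (ℝ × ℝ) | p.1 ∈ E ∧ p.2 ∈ E ∧ dot p.1 p.2 = α ⟨0, by omega⟩}.ncard : ℝ) *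
            ({p : (ℝ × ℝ) × (ℝ × ℝ) | p.1 ∈ E ∧ p.2 ∈ E ∧ dot p.1 p.2 = α ⟨2, by omega⟩}.ncard : ℝ) := by
          exact_mod_cast hb
        have hS0 := hS _ (hα ⟨0, by omega⟩)
        have hS2 := hS _ (hα ⟨2, by omega⟩)
        calc ((chains E α).ncard : ℝ) ≤ _ := hb'
          _ ≤ (S * (E.card : ℝ) ^ ((4:ℝ)/3)) * (S * (E.card : ℝ) ^ ((4:ℝ)/3)) := by
              apply mul_le_mul hS0 hS2 (Nat.cast_nonneg _) (le_trans (Nat.cast_nonneg _) hS0)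
          _ = H ^ 0 * S ^ 2 * (E.card : ℝ) ^ ((6 * ((0:ℕ) : ℝ) + 8) / 3) := by
              rw [show (6 * ((0:ℕ) : ℝ) + 8) / 3 = (4:ℝ)/3 + (4:ℝ)/3 by norm_num,
                Real.rpow_add hn]
              ring
      | succ m ih =>
        intro α hα
        have hstep := chains_step E (3 * m + 3) α
        have hstep' : ((chains E α).ncard : ℝ) ≤
            ({t : (ℝ × ℝ) × (ℝ × ℝ) × (ℝ × ℝ) | t.1 ∈ E ∧ t.2.1 ∈ E ∧ t.2.2 ∈ E ∧
              dot t.1 t.2.1 = α ⟨0, by omega⟩ ∧ dot t.2.1 t.2.2 = α ⟨1, by omega⟩}.ncard : ℝ) *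
            ((chains E (fun j : Fin (3 * m + 3) => α ⟨j.val + 3, by omega⟩)).ncard : ℝ) := by
          exact_mod_cast hstep
        have hHb := hH _ _ (hα ⟨0, by omega⟩) (hα ⟨1, by omega⟩)
        have hih := ih (fun j : Fin (3 * m + 3) => α ⟨j.val + 3, by omega⟩)
          (fun j => hα ⟨j.val + 3, by omega⟩)
        calc ((chains E α).ncard : ℝ) ≤ _ := hstep'
          _ ≤ (H * (E.card : ℝ) ^ 2) *
              (H ^ m * S ^ 2 * (E.card : ℝ) ^ ((6 * (m : ℝ) + 8) / 3)) := by
              apply mul_le_mul hHb hih (Nat.cast_nonneg _) (le_trans (Nat.cast_nonneg _) hHb)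
          _ = H ^ (m + 1) * S ^ 2 * (E.card : ℝ) ^ ((6 * ((m + 1 : ℕ) : ℝ) + 8) / 3) := by
              rw [show (6 * ((m + 1 : ℕ) : ℝ) + 8) / 3 = (2:ℝ) + (6 * (m : ℝ) + 8) / 3 by
                  push_cast; ring,
                Real.rpow_add hn,
                show ((2:ℝ)) = ((2:ℕ) : ℝ) by norm_num, Real.rpow_natCast]
              ring
    have hkey := key m α hα
    have e1 : (3 * m + 3 - 3) / 3 = m := by omega
    have e2 : ((2 * ((3 * m + 3 : ℕ) + 1) : ℝ) / 3) = (6 * (m : ℝ) + 8) / 3 := by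
      push_cast
      ring
    rw [e1, e2]
    exact hkey
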